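/- Let G = (V, ω, μ) be a locally finite connected weighted graph with D_μ < ∞, Ω ⊆ V a nonempty finite subset with nonempty interior Ω°, and α > 0. Suppose a : Ω° → ℝ is bounded, nonnegative and not identically zero and satisfies ∑_{x∈Ω°} μ(x) a(x) φ₁(x) > λ₁^{1/α}. Then every solution of the Dirichlet problem ∂_t u(t,x) = Δ_Ω u(t,x) + u(t,x)^{1+α} on (0,∞) × Ω°, u(0,x) = a(x) on Ω°, u(t,x) = 0 on [0,∞) × ∂Ω, blows up in a finite time; i.e., there is no such solution defined for all t ∈ [0,∞). -/

import Mathlib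

open Set

/-- The μ-Laplacian on a weighted graph; for `x` in the interior of a finite set `Ω`
and functions vanishing on `∂Ω` this is the Dirichlet Laplacian `Δ_Ω`. -/
noncomputable def graphLap {V : Type*} (ω : V → V → ℝ) (μ : V → ℝ)
    (h : V → ℝ) (x : V) : ℝ :=
  (∑' y, ω x y * (h y - h x)) / μ x

open Classical in
/-- The boundary `∂Ω = {x ∈ Ω : ∃ y ∉ Ω, y ~ x}` of a finite subset of a weighted graph. -/
noncomputable def graphBoundary {V : Type*} (ω : V → V → ℝ) (Ω : Finset V) : Finset V :=
  Ω.filter fun x => ∃ y ∉ Ω, 0 < ω x y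

open Classical in
/-- The interior `Ω° = Ω \ ∂Ω` of a finite subset of a weighted graph: the points of `Ω`
all of whose neighbours lie in `Ω`. -/
noncomputable def graphInterior {V : Type*} (ω : V → V → ℝ) (Ω : Finset V) : Finset V :=
  Ω.filter fun x => ∀ y, 0 < ω x y → y ∈ Ω

/-- One-sided derivative sign at a right-endpoint minimum. -/
lemma deriv_nonpos_of_min_left {f : ℝ → ℝ} {f' t₀ : ℝ} (hd : HasDerivAt f f' t₀)
    (ht : 0 < t₀) (hmin : ∀ s ∈ Icc (0:ℝ) t₀, f t₀ ≤ f s) : f' ≤ 0 := by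
  have hslope : Filter.Tendsto (slope f t₀) (nhdsWithin t₀ (Iio t₀)) (nhds f') :=
    (hasDerivAt_iff_tendsto_slope.mp hd).mono_left
      (nhdsWithin_mono _ (fun s hs => ne_of_lt hs))
  refine le_of_tendsto hslope ?_
  filter_upwards [Ioo_mem_nhdsLT ht, self_mem_nhdsWithin] with s hs hs'
  have hnum : 0 ≤ f s - f t₀ := sub_nonneg.2 (hmin s ⟨hs.1.le, hs.2.le⟩)
  have hden : s - t₀ < 0 := sub_neg.2 hs.2
  rw [slope_def_field]
  exact div_nonpos_of_nonneg_of_nonpos hnum hden.le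

lemma lap_eq_sum {V : Type*} (ω : V → V → ℝ) (μ : V → ℝ)
    (hwnn : ∀ x y, 0 ≤ ω x y) (hlocfin : ∀ x, {y | 0 < ω x y}.Finite)
    (h : V → ℝ) (x : V) :
    graphLap ω μ h x = (∑ y ∈ (hlocfin x).toFinset, ω x y * (h y - h x)) / μ x := by
  unfold graphLap
  congr 1
  refine tsum_eq_sum fun y hy => ?_
  have : ¬ 0 < ω x y := by simpa using hy
  have : ω x y = 0 := le_antisymm (not_lt.1 this) (hwnn x y)
  simp [this]

/-- Green-type symmetry on the interior, for functions vanishing appropriately. -/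
lemma green_identity {V : Type*} (ω : V → V → ℝ) (μ : V → ℝ)
    (hsymm : ∀ x y, ω x y = ω y x) (hwnn : ∀ x y, 0 ≤ ω x y)
    (hμpos : ∀ x, 0 < μ x) (hlocfin : ∀ x, {y | 0 < ω x y}.Finite)
    (Ω : Finset V) (f g : V → ℝ)
    (hg0 : ∀ x ∉ graphInterior ω Ω, g x = 0)
    (hf0 : ∀ x ∈ Ω, x ∉ graphInterior ω Ω → f x = 0) :
    ∑ x ∈ graphInterior ω Ω, g x * (μ x * graphLap ω μ f x)
      = ∑ x ∈ graphInterior ω Ω, f x * (μ x * graphLap ω μ g x) := by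
  classical
  set I := graphInterior ω Ω with hI
  set T : V → V → ℝ := fun x y => ω x y * (g x * f y - f x * g y) with hT
  have hmem : ∀ x, x ∈ I ↔ x ∈ Ω ∧ ∀ y, 0 < ω x y → y ∈ Ω := by
    intro x; simp [hI, graphInterior, Finset.mem_filter]
  have key : ∀ x ∈ I,
      g x * (μ x * graphLap ω μ f x) - f x * (μ x * graphLap ω μ g x)
        = ∑ y ∈ I, T x y := by
    intro x hx
    have hlf := lap_eq_sum ω μ hwnn hlocfin f x
    have hlg := lap_eq_sum ω μ hwnn hlocfin g x
    have hμ : μ x ≠ 0 := (hμpos x).ne'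
    have h1 : g x * (μ x * graphLap ω μ f x) - f x * (μ x * graphLap ω μ g x)
        = ∑ y ∈ (hlocfin x).toFinset, T x y := by
      rw [hlf, hlg, mul_div_cancel₀ _ hμ, mul_div_cancel₀ _ hμ,
        Finset.mul_sum, Finset.mul_sum, ← Finset.sum_sub_distrib]
      exact Finset.sum_congr rfl fun y _ => by ring
    rw [h1]
    have hsub1 : ∑ y ∈ (hlocfin x).toFinset, T x y
        = ∑ y ∈ (hlocfin x).toFinset ∩ I, T x y := by
      refine (Finset.sum_subset Finset.inter_subset_left fun y hy hy' => ?_).symm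
      have hωpos : 0 < ω x y := by simpa using hy
      have hyΩ : y ∈ Ω := ((hmem x).1 hx).2 y hωpos
      have hyI : y ∉ I := fun h => hy' (Finset.mem_inter.2 ⟨hy, h⟩)
      simp [hT, hf0 y hyΩ hyI, hg0 y hyI]
    have hsub2 : ∑ y ∈ I, T x y = ∑ y ∈ (hlocfin x).toFinset ∩ I, T x y := by
      refine (Finset.sum_subset Finset.inter_subset_right fun y hy hy' => ?_).symm
      have : y ∉ (hlocfin x).toFinset := fun h => hy' (Finset.mem_inter.2 ⟨h, hy⟩)
      have : ¬ 0 < ω x y := by simpa using this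
      have hω : ω x y = 0 := le_antisymm (not_lt.1 this) (hwnn x y)
      simp [hT, hω]
    rw [hsub1, ← hsub2]
  have hsum : ∑ x ∈ I, (g x * (μ x * graphLap ω μ f x) - f x * (μ x * graphLap ω μ g x))
      = ∑ x ∈ I, ∑ y ∈ I, T x y := Finset.sum_congr rfl key
  have hanti : ∑ x ∈ I, ∑ y ∈ I, T x y = 0 := by
    have h2 : ∑ x ∈ I, ∑ y ∈ I, T x y = ∑ x ∈ I, ∑ y ∈ I, T y x := Finset.sum_comm
    have h3 : ∀ x y, T y x = - T x y := by
      intro x y; simp only [hT]; rw [hsymm y x]; ring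
    have h4 : ∑ x ∈ I, ∑ y ∈ I, T y x = - ∑ x ∈ I, ∑ y ∈ I, T x y := by
      rw [← Finset.sum_neg_distrib]
      refine Finset.sum_congr rfl fun x _ => ?_
      rw [← Finset.sum_neg_distrib]
      exact Finset.sum_congr rfl fun y _ => h3 x y
    linarith [h2, h4]
  rw [Finset.sum_sub_distrib] at hsum
  linarith [hsum, hanti]

theorem blowup_dirichlet_power
    {V : Type*} [Countable V] (ω : V → V → ℝ) (μ : V → ℝ)
    (hsymm : ∀ x y, ω x y = ω y x)
    (hwnn : ∀ x y, 0 ≤ ω x y)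
    (hμpos : ∀ x, 0 < μ x)
    (hlocfin : ∀ x, {y | 0 < ω x y}.Finite)
    (hdeg : ∀ x, ∃ y, 0 < ω x y)
    (hconn : ∀ x y, Relation.ReflTransGen (fun a b => 0 < ω a b) x y)
    (Dμ : ℝ) (hDμ : ∀ x, (∑' y, ω x y) / μ x ≤ Dμ)
    (Ω : Finset V) (hΩne : Ω.Nonempty) (hΩint : (graphInterior ω Ω).Nonempty)
    (α : ℝ) (hα : 0 < α)
    -- the initial datum
    (a : V → ℝ)
    (ha_nonneg : ∀ x ∈ graphInterior ω Ω, 0 ≤ a x)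
    (ha_nontriv : ∃ x ∈ graphInterior ω Ω, a x ≠ 0)
    -- `λ₁`, the smallest eigenvalue of `−Δ_Ω`, with positive normalized eigenfunction `φ₁`
    (lam₁ : ℝ) (hlam₁_pos : 0 < lam₁)
    (φ₁ : V → ℝ)
    (hφ₁_pos : ∀ x ∈ graphInterior ω Ω, 0 < φ₁ x)
    (hφ₁_zero : ∀ x ∉ graphInterior ω Ω, φ₁ x = 0)
    (hφ₁_norm : ∑ x ∈ graphInterior ω Ω, μ x * φ₁ x = 1)
    (hφ₁_eig : ∀ x ∈ graphInterior ω Ω, graphLap ω μ φ₁ x = -lam₁ * φ₁ x)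
    (hlam₁_min : ∀ (lam : ℝ) (ψ : V → ℝ), (∀ x ∉ graphInterior ω Ω, ψ x = 0) → ψ ≠ 0 →
      (∀ x ∈ graphInterior ω Ω, graphLap ω μ ψ x = -lam * ψ x) → lam₁ ≤ lam)
    -- the largeness condition on the initial datum
    (hbig : lam₁ ^ (1 / α) < ∑ x ∈ graphInterior ω Ω, μ x * a x * φ₁ x) :
    -- conclusion: no global solution of the Dirichlet problem exists
    ¬ ∃ (u u' : ℝ → V → ℝ),
        (∀ x ∈ Ω, ContinuousOn (fun t => u t x) (Ici (0:ℝ))) ∧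
        (∀ x ∈ Ω, ∀ t > (0:ℝ), HasDerivAt (fun s => u s x) (u' t x) t) ∧
        (∀ T > (0:ℝ), ∃ C, ∀ t ∈ Icc (0:ℝ) T, ∀ x ∈ Ω, |u t x| ≤ C) ∧
        (∀ t > (0:ℝ), ∀ x ∈ graphInterior ω Ω,
          u' t x = graphLap ω μ (u t) x + u t x ^ (1 + α)) ∧
        (∀ x ∈ graphInterior ω Ω, u 0 x = a x) ∧
        (∀ t ≥ (0:ℝ), ∀ x ∈ graphBoundary ω Ω, u t x = 0) := by
  classical
  rintro ⟨u, u', hcont, hderiv, hbdd, heq, hinit, hbc⟩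
  set I := graphInterior ω Ω with hIdef
  have hIsubΩ : I ⊆ Ω := Finset.filter_subset _ _
  have hImem : ∀ x, x ∈ I ↔ x ∈ Ω ∧ ∀ y, 0 < ω x y → y ∈ Ω := by
    intro x; simp [hIdef, graphInterior, Finset.mem_filter]
  -- vanishing on Ω \ I for t ≥ 0
  have hzeroΩ : ∀ t ≥ (0:ℝ), ∀ x ∈ Ω, x ∉ I → u t x = 0 := by
    intro t ht x hxΩ hxI
    apply hbc t ht
    simp only [graphBoundary, Finset.mem_filter]
    refine ⟨hxΩ, ?_⟩
    have := (hImem x).not.1 hxI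
    push_neg at this
    rcases this hxΩ with ⟨y, hy1, hy2⟩
    exact ⟨y, hy2, hy1⟩
  -- ** Maximum principle: u ≥ 0 on [0,∞) × I **
  have hnonnegT : ∀ T > (0:ℝ), ∀ t ∈ Icc (0:ℝ) T, ∀ x ∈ I, 0 ≤ u t x := by
    intro T hT
    by_contra hneg
    push_neg at hneg
    obtain ⟨t₁, ht₁, x₁, hx₁, hux₁⟩ := hneg
    obtain ⟨C, hC⟩ := hbdd T hT
    set L : ℝ := (max C 1) ^ α with hLdef
    have hmax1 : (1:ℝ) ≤ max C 1 := le_max_right _ _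
    have hL1 : (1:ℝ) ≤ L := by
      calc (1:ℝ) = 1 ^ α := (Real.one_rpow α).symm
      _ ≤ (max C 1) ^ α := Real.rpow_le_rpow zero_le_one hmax1 hα.le
    have hLpos : 0 < L := lt_of_lt_of_le one_pos hL1
    -- bound on the nonlinearity
    have hnl : ∀ s ∈ Icc (0:ℝ) T, ∀ x ∈ Ω, |u s x ^ (1+α)| ≤ L * |u s x| := by
      intro s hs x hx
      rcases eq_or_ne (u s x) 0 with h0 | h0
      · rw [h0, Real.zero_rpow (by positivity)]; simp
      · have habs : |u s x ^ (1+α)| ≤ |u s x| ^ (1+α) := Real.abs_rpow_le_abs_rpow _ _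
        have hpos : 0 < |u s x| := abs_pos.2 h0
        have hsplit : |u s x| ^ (1+α) = |u s x| ^ α * |u s x| := by
          rw [add_comm, Real.rpow_add hpos, Real.rpow_one]
        have hbnd : |u s x| ^ α ≤ L := by
          refine Real.rpow_le_rpow (abs_nonneg _) ?_ hα.le
          exact (hC s hs x hx).trans (le_max_left _ _)
        calc |u s x ^ (1+α)| ≤ |u s x| ^ α * |u s x| := habs.trans_eq hsplit
        _ ≤ L * |u s x| := mul_le_mul_of_nonneg_right hbnd (abs_nonneg _)
    set w : ℝ → V → ℝ := fun s x => u s x * Real.exp (-(L+1) * s) with hwdef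
    -- for each x ∈ I, a time minimizing w (·, x) on [0, T]
    have hwcont : ∀ x ∈ Ω, ContinuousOn (fun s => w s x) (Icc (0:ℝ) T) := by
      intro x hx
      exact ((hcont x hx).mono Icc_subset_Ici_self).mul
        ((Real.continuous_exp.comp (continuous_const.mul continuous_id)).continuousOn)
    have hargmin : ∀ x ∈ I, ∃ s ∈ Icc (0:ℝ) T, ∀ τ ∈ Icc (0:ℝ) T, w s x ≤ w τ x := by
      intro x hx
      obtain ⟨s, hs, hmin⟩ := isCompact_Icc.exists_isMinOn (nonempty_Icc.2 hT.le)
        (hwcont x (hIsubΩ hx))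
      exact ⟨s, hs, fun τ hτ => hmin hτ⟩
    choose st hst hstmin using hargmin
    obtain ⟨x₀, hx₀, hx₀min⟩ := Finset.exists_min_image I
      (fun x => if h : x ∈ I then w (st x h) x else 0) hΩint
    set t₀ := st x₀ hx₀ with ht₀def
    have ht₀mem : t₀ ∈ Icc (0:ℝ) T := hst x₀ hx₀
    have hglobal : ∀ τ ∈ Icc (0:ℝ) T, ∀ x ∈ I, w t₀ x₀ ≤ w τ x := by
      intro τ hτ x hx
      have h1 := hx₀min x hx
      rw [dif_pos hx₀, dif_pos hx] at h1
      exact h1.trans (hstmin x hx τ hτ)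
    have hm_neg : w t₀ x₀ < 0 := by
      have : w t₁ x₁ < 0 := mul_neg_of_neg_of_pos hux₁ (Real.exp_pos _)
      exact lt_of_le_of_lt (hglobal t₁ ht₁ x₁ hx₁) this
    have ht₀pos : 0 < t₀ := by
      rcases ht₀mem.1.lt_or_eq with h | h
      · exact h
      · exfalso
        have hw0 : w 0 x₀ = a x₀ := by simp [hwdef, hinit x₀ hx₀]
        have h2 : w t₀ x₀ = a x₀ := by rw [← h]; exact hw0
        have h3 := ha_nonneg x₀ hx₀
        linarith [hm_neg, h2, h3]
    have hu₀neg : u t₀ x₀ < 0 := by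
      by_contra h
      push_neg at h
      exact absurd (mul_nonneg h (Real.exp_pos _).le) (not_le.2 hm_neg)
    have hEpos : (0:ℝ) < Real.exp (-(L+1) * t₀) := Real.exp_pos _
    -- Laplacian is nonnegative at the minimum point
    have hlapnn : 0 ≤ graphLap ω μ (u t₀) x₀ := by
      rw [lap_eq_sum ω μ hwnn hlocfin]
      apply div_nonneg _ (hμpos x₀).le
      apply Finset.sum_nonneg
      intro y hy
      have hωpos : 0 < ω x₀ y := by simpa using hy
      have hyΩ : y ∈ Ω := ((hImem x₀).1 hx₀).2 y hωpos
      have huy : u t₀ x₀ ≤ u t₀ y := by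
        by_cases hyI : y ∈ I
        · have h1 := hglobal t₀ ht₀mem y hyI
          simp only [hwdef] at h1
          exact le_of_mul_le_mul_right h1 hEpos
        · rw [hzeroΩ t₀ ht₀pos.le y hyΩ hyI]; exact hu₀neg.le
      exact mul_nonneg hωpos.le (sub_nonneg.2 huy)
    -- derivative of w at the minimum is nonpositive
    have hdw : HasDerivAt (fun s => w s x₀)
        (u' t₀ x₀ * Real.exp (-(L+1) * t₀)
          + u t₀ x₀ * (Real.exp (-(L+1) * t₀) * (-(L+1)))) t₀ := by
      have h1 := hderiv x₀ (hIsubΩ hx₀) t₀ ht₀pos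
      have h2 : HasDerivAt (fun s : ℝ => Real.exp (-(L+1) * s))
          (Real.exp (-(L+1)*t₀) * (-(L+1))) t₀ := by
        have := ((hasDerivAt_id t₀).const_mul (-(L+1))).exp
        simpa [mul_comm] using this
      exact h1.mul h2
    have hd_le : u' t₀ x₀ * Real.exp (-(L+1)*t₀)
        + u t₀ x₀ * (Real.exp (-(L+1)*t₀) * (-(L+1))) ≤ 0 := by
      refine deriv_nonpos_of_min_left hdw ht₀pos ?_
      intro s hs
      exact hglobal s ⟨hs.1, hs.2.trans ht₀mem.2⟩ x₀ hx₀
    -- lower bound on the nonlinearity at the minimum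
    have hnl₀ := hnl t₀ ht₀mem x₀ (hIsubΩ hx₀)
    have h_abs : |u t₀ x₀| = - u t₀ x₀ := abs_of_neg hu₀neg
    rw [h_abs] at hnl₀
    have hlow : L * u t₀ x₀ ≤ u t₀ x₀ ^ (1+α) := by
      have h1 := neg_abs_le (u t₀ x₀ ^ (1+α))
      have h2 : -(L * -(u t₀ x₀)) = L * u t₀ x₀ := by ring
      linarith [hnl₀, h1]
    have hequ := heq t₀ ht₀pos x₀ hx₀
    have hu'ge : L * u t₀ x₀ ≤ u' t₀ x₀ := by
      rw [hequ]; linarith [hlapnn, hlow]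
    have hpos2 : 0 < u' t₀ x₀ - (L+1) * u t₀ x₀ := by nlinarith [hu'ge, hu₀neg, hLpos]
    nlinarith [mul_pos hpos2 hEpos, hd_le]
  -- global nonnegativity
  have hnonneg : ∀ t ≥ (0:ℝ), ∀ x ∈ I, 0 ≤ u t x := by
    intro t ht x hx
    rcases ht.lt_or_eq with h | h
    · exact hnonnegT t h t ⟨ht, le_refl t⟩ x hx
    · rw [← h, hinit x hx]; exact ha_nonneg x hx
  -- ** The functional J(t) = ∑ μ φ₁ u(t) **
  set J : ℝ → ℝ := fun t => ∑ x ∈ I, μ x * φ₁ x * u t x with hJdef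
  set JD : ℝ → ℝ := fun t => ∑ x ∈ I, μ x * φ₁ x * u' t x with hJDdef
  have hwnonneg : ∀ x ∈ I, 0 ≤ μ x * φ₁ x := fun x hx =>
    mul_nonneg (hμpos x).le (hφ₁_pos x hx).le
  have hJcont : ContinuousOn J (Ici (0:ℝ)) := by
    apply continuousOn_finset_sum
    intro x hx
    exact continuousOn_const.mul (hcont x (hIsubΩ hx))
  have hJD : ∀ t > (0:ℝ), HasDerivAt J (JD t) t := by
    intro t ht
    apply HasDerivAt.fun_sum
    intro x hx
    exact (hderiv x (hIsubΩ hx) t ht).const_mul _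
  have hJnonneg : ∀ t ≥ (0:ℝ), 0 ≤ J t := fun t ht =>
    Finset.sum_nonneg fun x hx => mul_nonneg (hwnonneg x hx) (hnonneg t ht x hx)
  have hJ0 : lam₁ ^ (1/α) < J 0 := by
    have h1 : J 0 = ∑ x ∈ I, μ x * a x * φ₁ x := by
      apply Finset.sum_congr rfl
      intro x hx; rw [hinit x hx]; ring
    rw [h1]; exact hbig
  -- Green's identity: the linear part of J'
  have hgreen : ∀ t ≥ (0:ℝ),
      ∑ x ∈ I, μ x * φ₁ x * graphLap ω μ (u t) x = -lam₁ * J t := by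
    intro t ht
    have h1 : ∑ x ∈ I, φ₁ x * (μ x * graphLap ω μ (u t) x)
        = ∑ x ∈ I, u t x * (μ x * graphLap ω μ φ₁ x) :=
      green_identity ω μ hsymm hwnn hμpos hlocfin Ω (u t) φ₁ hφ₁_zero (hzeroΩ t ht)
    have h2 : ∑ x ∈ I, u t x * (μ x * graphLap ω μ φ₁ x) = -lam₁ * J t := by
      rw [hJdef, Finset.mul_sum]
      apply Finset.sum_congr rfl
      intro x hx
      rw [hφ₁_eig x hx]; ring
    calc ∑ x ∈ I, μ x * φ₁ x * graphLap ω μ (u t) x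
        = ∑ x ∈ I, φ₁ x * (μ x * graphLap ω μ (u t) x) :=
          Finset.sum_congr rfl fun x _ => by ring
      _ = -lam₁ * J t := h1.trans h2
  -- Jensen's inequality
  have hJensen : ∀ t ≥ (0:ℝ), J t ^ (1+α) ≤ ∑ x ∈ I, μ x * φ₁ x * u t x ^ (1+α) := by
    intro t ht
    exact Real.rpow_arith_mean_le_arith_mean_rpow I (fun x => μ x * φ₁ x) (u t)
      hwnonneg hφ₁_norm (fun x hx => hnonneg t ht x hx) (by linarith)
  -- the differential inequality J' ≥ -λ₁ J + J^{1+α}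
  have hJDge : ∀ t > (0:ℝ), -lam₁ * J t + J t ^ (1+α) ≤ JD t := by
    intro t ht
    have h1 : JD t = ∑ x ∈ I, μ x * φ₁ x * (graphLap ω μ (u t) x + u t x ^ (1+α)) := by
      apply Finset.sum_congr rfl; intro x hx; rw [heq t ht x hx]
    rw [h1]
    simp_rw [mul_add]
    rw [Finset.sum_add_distrib, hgreen t ht.le]
    have h2 := hJensen t ht.le
    linarith
  -- positivity of J
  have hJpos : ∀ t ≥ (0:ℝ), 0 < J t := by
    set Y : ℝ → ℝ := fun t => J t * Real.exp (lam₁ * t) with hYdef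
    have hYcont : ContinuousOn Y (Ici 0) := hJcont.mul
      (Real.continuous_exp.comp (continuous_const.mul continuous_id)).continuousOn
    have hYd : ∀ t ∈ interior (Ici (0:ℝ)),
        HasDerivAt Y (JD t * Real.exp (lam₁*t) + J t * (Real.exp (lam₁*t)*lam₁)) t := by
      intro t ht
      rw [interior_Ici, mem_Ioi] at ht
      have h2 : HasDerivAt (fun s : ℝ => Real.exp (lam₁ * s)) (Real.exp (lam₁*t)*lam₁) t := by
        have := ((hasDerivAt_id t).const_mul lam₁).exp
        simpa [mul_comm] using this
      exact (hJD t ht).mul h2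
    have hmono : MonotoneOn Y (Ici 0) := by
      apply monotoneOn_of_deriv_nonneg (convex_Ici 0) hYcont
      · intro t ht
        exact (hYd t ht).differentiableAt.differentiableWithinAt
      · intro t ht
        rw [(hYd t ht).deriv]
        have ht' : 0 < t := by rwa [interior_Ici, mem_Ioi] at ht
        have h1 := hJDge t ht'
        have h2 : 0 ≤ J t ^ (1+α) := Real.rpow_nonneg (hJnonneg t ht'.le) _
        nlinarith [mul_nonneg (Real.exp_pos (lam₁*t)).le
          (show 0 ≤ JD t + lam₁ * J t by linarith)]
    intro t ht
    have h0 : 0 < Y 0 := by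
      have : 0 < J 0 := lt_trans (Real.rpow_pos_of_pos hlam₁_pos _) hJ0
      simpa [hYdef] using this
    have hYt := hmono self_mem_Ici ht ht
    by_contra h
    push_neg at h
    have : Y t ≤ 0 := mul_nonpos_of_nonpos_of_nonneg h (Real.exp_pos _).le
    linarith
  -- ** the blow-up functional H = J^{-α} **
  set H : ℝ → ℝ := fun t => J t ^ (-α) with hHdef
  have hHpos : ∀ t ≥ (0:ℝ), 0 < H t := fun t ht => Real.rpow_pos_of_pos (hJpos t ht) _
  have hHcont : ContinuousOn H (Ici (0:ℝ)) :=
    hJcont.rpow_const (fun t ht => Or.inl (hJpos t ht).ne')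
  set HD : ℝ → ℝ := fun t => JD t * (-α) * J t ^ (-α - 1) with hHDdef
  have hHd : ∀ t > (0:ℝ), HasDerivAt H (HD t) t := by
    intro t ht
    exact (hJD t ht).rpow_const (Or.inl (hJpos t ht.le).ne')
  have hHD_le : ∀ t > (0:ℝ), HD t ≤ α * lam₁ * H t - α := by
    intro t ht
    have hJp := hJpos t ht.le
    have hrp : 0 < J t ^ (-α-1) := Real.rpow_pos_of_pos hJp _
    have hc : JD t * ((-α) * J t ^ (-α-1))
        ≤ (-lam₁ * J t + J t ^ (1+α)) * ((-α) * J t ^ (-α-1)) := by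
      apply mul_le_mul_of_nonpos_right (hJDge t ht)
      nlinarith
    have e1 : J t ^ ((-α):ℝ) = J t * J t ^ (-α-1) := by
      have h5 := Real.rpow_add hJp 1 (-α-1)
      rw [Real.rpow_one, show (1:ℝ) + (-α-1) = -α by ring] at h5
      exact h5
    have e2 : J t ^ (1+α) * J t ^ (-α-1) = 1 := by
      rw [← Real.rpow_add hJp, show (1+α) + (-α-1) = (0:ℝ) by ring, Real.rpow_zero]
    calc HD t = JD t * ((-α) * J t ^ (-α-1)) := by simp only [hHDdef]; ring
      _ ≤ (-lam₁ * J t + J t ^ (1+α)) * ((-α) * J t ^ (-α-1)) := hc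
      _ = α * lam₁ * (J t * J t ^ (-α-1)) - α * (J t ^ (1+α) * J t ^ (-α-1)) := by ring
      _ = α * lam₁ * H t - α := by rw [← e1, e2]; simp only [hHdef]; ring
  -- ** the comparison functional G **
  have hinv : lam₁ * (1/lam₁) = 1 := mul_one_div_cancel hlam₁_pos.ne'
  set G : ℝ → ℝ := fun t => (H t - 1/lam₁) * Real.exp (-(α*lam₁) * t) with hGdef
  have hGcont : ContinuousOn G (Ici (0:ℝ)) := (hHcont.sub continuousOn_const).mul
    (Real.continuous_exp.comp (continuous_const.mul continuous_id)).continuousOn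
  have hGd : ∀ t > (0:ℝ), HasDerivAt G
      (HD t * Real.exp (-(α*lam₁)*t)
        + (H t - 1/lam₁) * (Real.exp (-(α*lam₁)*t) * (-(α*lam₁)))) t := by
    intro t ht
    have h2 : HasDerivAt (fun s : ℝ => Real.exp (-(α*lam₁) * s))
        (Real.exp (-(α*lam₁)*t) * (-(α*lam₁))) t := by
      have := ((hasDerivAt_id t).const_mul (-(α*lam₁))).exp
      simpa [mul_comm] using this
    exact ((hHd t ht).sub_const _).mul h2
  have hGanti : AntitoneOn G (Ici (0:ℝ)) := by
    apply antitoneOn_of_deriv_nonpos (convex_Ici 0) hGcont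
    · intro t ht
      rw [interior_Ici, mem_Ioi] at ht
      exact (hGd t ht).differentiableAt.differentiableWithinAt
    · intro t ht
      rw [interior_Ici, mem_Ioi] at ht
      rw [(hGd t ht).deriv]
      have h3 : HD t * Real.exp (-(α*lam₁)*t)
          + (H t - 1/lam₁) * (Real.exp (-(α*lam₁)*t) * (-(α*lam₁)))
          = Real.exp (-(α*lam₁)*t) * (HD t - α*lam₁*H t + α * (lam₁ * (1/lam₁))) := by
        ring
      rw [h3, hinv, mul_one]
      exact mul_nonpos_of_nonneg_of_nonpos (Real.exp_pos _).le
        (by linarith [hHD_le t ht])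
  -- G(0) < 0
  have hG0neg : G 0 < 0 := by
    have hJα : lam₁ < J 0 ^ α := by
      have h1 : (lam₁ ^ (1/α)) ^ α < J 0 ^ α :=
        Real.rpow_lt_rpow (Real.rpow_pos_of_pos hlam₁_pos _).le hJ0 hα
      rwa [← Real.rpow_mul hlam₁_pos.le, one_div_mul_cancel hα.ne', Real.rpow_one] at h1
    have hJαpos : 0 < J 0 ^ α := lt_trans hlam₁_pos hJα
    have hH0 : H 0 < 1/lam₁ := by
      have h2 : H 0 = (J 0 ^ α)⁻¹ := by
        simp only [hHdef]
        rw [Real.rpow_neg (hJpos 0 le_rfl).le]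
      rw [h2, one_div]
      exact inv_strictAnti₀ hlam₁_pos hJα
    have h4 : G 0 = H 0 - 1/lam₁ := by simp [hGdef]
    linarith
  -- choose a late time and derive the contradiction
  set M := (1/lam₁) / (-G 0) with hM
  have hMpos : 0 < M := div_pos (by positivity) (by linarith)
  set ts := M / (α * lam₁) with hts
  have htspos : 0 < ts := div_pos hMpos (by positivity)
  have hGts : G ts ≤ G 0 := hGanti self_mem_Ici (mem_Ici.2 htspos.le) htspos.le
  have hexp : M < Real.exp (α * lam₁ * ts) := by
    have h1 : α * lam₁ * ts = M := by
      rw [hts]; field_simp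
    calc M < M + 1 := lt_add_one M
      _ ≤ Real.exp M := Real.add_one_le_exp M
      _ = Real.exp (α * lam₁ * ts) := by rw [h1]
  have hHts : H ts = G ts * Real.exp (α*lam₁*ts) + 1/lam₁ := by
    have hee : Real.exp (-(α*lam₁)*ts) * Real.exp (α*lam₁*ts) = 1 := by
      rw [← Real.exp_add]
      norm_num
    simp only [hGdef]
    linear_combination (1/lam₁ - H ts) * hee
  have hfin : G ts * Real.exp (α*lam₁*ts) < -(1/lam₁) := by
    have h2 : G 0 * Real.exp (α*lam₁*ts) < G 0 * M := mul_lt_mul_of_neg_left hexp hG0neg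
    have h3 : G 0 * M = -(1/lam₁) := by
      rw [hM]
      have hne : G 0 ≠ 0 := ne_of_lt hG0neg
      field_simp
    have h4 : G ts * Real.exp (α*lam₁*ts) ≤ G 0 * Real.exp (α*lam₁*ts) :=
      mul_le_mul_of_nonneg_right hGts (Real.exp_pos _).le
    linarith
  have hHtspos := hHpos ts htspos.le
  linarith
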